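/- Let A be a commutative ℂ-algebra, Ω¹ a finitely generated projective A-module, d : A → Ω¹ a ℂ-linear derivation, ∇ a connection on Ω¹, g ∈ Ω¹ ⊗_A Ω¹ a nondegenerate metric, and ∇* the adjoint connection of ∇ relative to g. Let Ω² be an A-module, ∧ : Ω¹ ⊗_A Ω¹ → Ω² a surjective A-module map, and d₁ : Ω¹ → Ω² a ℂ-linear map with d₁(fω) = df ∧ ω + f·d₁ω; set T_∇ := ∧∘∇ − d₁. Assume ∇ is torsion free, i.e. T_∇ = 0. Then ∇ is cotorsion free (T_{∇*} = 0) if and only if (∧ ⊗ id)(∇g) = 0 (weak metric compatibility), where ∇g := Σ (∇g¹) ⊗ g² + Σ g²₍₋₁₎ ⊗ g¹ ⊗ g²₍₀₎. In other words, a torsion free and cotorsion free connection is the same thing as a torsion free connection satisfying the skew metric-compatibility condition (∧ ⊗ id)(∇g) = 0. -/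
import Mathlib


noncomputable section

namespace WeakRiemannian

open scoped TensorProduct

variable (A : Type) [CommRing A] [Algebra ℂ A]
variable (Ω : Type) [AddCommGroup Ω] [Module ℂ Ω] [Module A Ω] [IsScalarTower ℂ A Ω]
variable (Ω2 : Type) [AddCommGroup Ω2] [Module ℂ Ω2] [Module A Ω2] [IsScalarTower ℂ A Ω2]

/-- `d : A → Ω¹` is a (ℂ-linear) derivation. -/
def IsDerivation (d : A →ₗ[ℂ] Ω) : Prop :=
  ∀ f g : A, d (f * g) = f • d g + g • d f

/-- A connection on `Ω¹`. -/
def IsConnection (d : A →ₗ[ℂ] Ω) (nab : Ω →ₗ[ℂ] Ω ⊗[A] Ω) : Prop :=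
  ∀ (f : A) (τ : Ω), nab (f • τ) = d f ⊗ₜ[A] τ + f • nab τ

/-- `(φ ⊗ id)(g)` for `φ ∈ Hom_A(Ω¹, A)`. -/
def contractL (φ : Ω →ₗ[A] A) : Ω ⊗[A] Ω →ₗ[A] Ω :=
  TensorProduct.lift ((LinearMap.lsmul A Ω).comp φ)

/-- `(id ⊗ φ)(g)` for `φ ∈ Hom_A(Ω¹, A)`. -/
def contractR (φ : Ω →ₗ[A] A) : Ω ⊗[A] Ω →ₗ[A] Ω :=
  TensorProduct.lift (((LinearMap.lsmul A Ω).comp φ).flip)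

/-- `g ∈ Ω¹ ⊗_A Ω¹` is a nondegenerate metric. -/
def IsMetric (g : Ω ⊗[A] Ω) : Prop :=
  Function.Bijective (fun φ : Ω →ₗ[A] A => contractL A Ω φ g) ∧
  Function.Bijective (fun φ : Ω →ₗ[A] A => contractR A Ω φ g)

/-- The defining condition of the adjoint connection:
`((∇* − ∇) ⊗ id)(g) = −∇g` on any representation `g = Σᵢ uᵢ ⊗ vᵢ`. -/
def AdjointCondition' (nabS nab : Ω →ₗ[ℂ] Ω ⊗[A] Ω) (g : Ω ⊗[A] Ω) : Prop :=
  ∀ (n : ℕ) (u v : Fin n → Ω), g = ∑ i, u i ⊗ₜ[A] v i →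
    (∑ i, TensorProduct.assoc A Ω Ω Ω ((nabS (u i) - nab (u i)) ⊗ₜ[A] v i)) =
      -((∑ i, TensorProduct.assoc A Ω Ω Ω (nab (u i) ⊗ₜ[A] v i)) +
        (∑ i, LinearMap.lTensor Ω (TensorProduct.mk A Ω Ω (u i)) (nab (v i))))

/-- `x ⊗ y ↦ (x ∧ τ) ⊗ y : Ω¹ ⊗_A Ω¹ → Ω² ⊗_A Ω¹`. -/
def wedgeMid (wedge : Ω ⊗[A] Ω →ₗ[A] Ω2) (τ : Ω) :
    Ω ⊗[A] Ω →ₗ[A] Ω2 ⊗[A] Ω :=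
  LinearMap.rTensor Ω (wedge ∘ₗ ((TensorProduct.mk A Ω Ω).flip τ))

/-- Let `∇` be a torsion free connection (`T_∇ = ∧∘∇ − d₁ = 0`)
with adjoint `∇*` relative to a nondegenerate metric `g` on a finitely
generated projective `Ω¹`.  Then `∇` is cotorsion free (`T_{∇*} = 0`) if and
only if the weak metric-compatibility condition `(∧ ⊗ id)(∇g) = 0` holds, where
`∇g = Σ (∇g¹) ⊗ g² + Σ g²₍₋₁₎ ⊗ g¹ ⊗ g²₍₀₎` (stated on every representation
`g = Σᵢ uᵢ ⊗ vᵢ`).  Thus a torsion free and cotorsion free connection is the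
same thing as a torsion free connection that is weakly metric compatible. -/
theorem cotorsion_free_iff_weak_metric_compatible
    [Module.Finite A Ω] [Module.Projective A Ω]
    (d : A →ₗ[ℂ] Ω) (hd : IsDerivation A Ω d)
    (nab : Ω →ₗ[ℂ] Ω ⊗[A] Ω) (hnab : IsConnection A Ω d nab)
    (g : Ω ⊗[A] Ω) (hg : IsMetric A Ω g)
    (nabS : Ω →ₗ[ℂ] Ω ⊗[A] Ω) (hnabS : IsConnection A Ω d nabS)
    (hadj : AdjointCondition' A Ω nabS nab g)
    (wedge : Ω ⊗[A] Ω →ₗ[A] Ω2) (hwedge : Function.Surjective wedge)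
    (d1 : Ω →ₗ[ℂ] Ω2)
    (hd1 : ∀ (f : A) (ω : Ω), d1 (f • ω) = wedge (d f ⊗ₜ[A] ω) + f • d1 ω)
    (htorsionfree : ∀ τ : Ω, wedge (nab τ) = d1 τ) :
    (∀ τ : Ω, wedge (nabS τ) = d1 τ) ↔
      (∀ (n : ℕ) (u v : Fin n → Ω), g = ∑ i, u i ⊗ₜ[A] v i →
        (∑ i, wedge (nab (u i)) ⊗ₜ[A] v i) +
          (∑ i, wedgeMid A Ω Ω2 wedge (u i) (nab (v i))) = 0) := by
  classical
  set Φ : Ω ⊗[A] (Ω ⊗[A] Ω) →ₗ[A] Ω2 ⊗[A] Ω :=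
    (LinearMap.rTensor Ω wedge) ∘ₗ (TensorProduct.assoc A Ω Ω Ω).symm.toLinearMap with hΦ
  have hΦ1 : ∀ (X : Ω ⊗[A] Ω) (w : Ω),
      Φ (TensorProduct.assoc A Ω Ω Ω (X ⊗ₜ[A] w)) = wedge X ⊗ₜ[A] w := by
    intro X w
    simp [hΦ, LinearMap.rTensor_tmul]
  have hΦ2 : ∀ (x : Ω) (t : Ω ⊗[A] Ω),
      Φ (LinearMap.lTensor Ω (TensorProduct.mk A Ω Ω x) t) =
        wedgeMid A Ω Ω2 wedge x t := by
    intro x t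
    induction t using TensorProduct.induction_on with
    | zero => simp
    | tmul p q => simp [hΦ, wedgeMid, LinearMap.rTensor_tmul]
    | add a b ha hb => simp only [map_add, ha, hb]
  have key : ∀ (n : ℕ) (u v : Fin n → Ω), g = ∑ i, u i ⊗ₜ[A] v i →
      (∑ i, wedge (nabS (u i)) ⊗ₜ[A] v i) +
        (∑ i, wedgeMid A Ω Ω2 wedge (u i) (nab (v i))) = 0 := by
    intro n u v hrep
    have H2 := congrArg Φ (hadj n u v hrep)
    simp only [map_sum, map_neg, map_add, hΦ1, hΦ2, map_sub,
      TensorProduct.sub_tmul, Finset.sum_sub_distrib] at H2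
    set SS := ∑ i, wedge (nabS (u i)) ⊗ₜ[A] v i
    set SN := ∑ i, wedge (nab (u i)) ⊗ₜ[A] v i
    set SW := ∑ i, wedgeMid A Ω Ω2 wedge (u i) (nab (v i))
    have : SS + SW = (SS - SN) + (SN + SW) := by abel
    rw [this, H2]; abel
  constructor
  · intro h n u v hrep
    have hk := key n u v hrep
    have he : ∀ i, wedge (nab (u i)) = wedge (nabS (u i)) := fun i => by
      rw [htorsionfree, h]
    simpa only [he] using hk
  · intro h τ
    obtain ⟨S, hS⟩ := TensorProduct.exists_finset g
    set n := S.card with hn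
    set e := S.equivFin with he
    set u : Fin n → Ω := fun i => (e.symm i).1.1 with hu
    set v : Fin n → Ω := fun i => (e.symm i).1.2 with hv
    have hrep : g = ∑ i, u i ⊗ₜ[A] v i := by
      rw [hS, ← Finset.sum_attach S (fun p => p.1 ⊗ₜ[A] p.2)]
      exact Fintype.sum_equiv e _ (fun i => u i ⊗ₜ[A] v i)
        (fun p => by simp only [hu, hv, Equiv.symm_apply_apply])
    have hk := key n u v hrep
    have hh := h n u v hrep
    have hdiff : ∑ i, (d1 (u i) - wedge (nabS (u i))) ⊗ₜ[A] v i = 0 := by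
      simp only [TensorProduct.sub_tmul, Finset.sum_sub_distrib, ← htorsionfree]
      set SS := ∑ i, wedge (nabS (u i)) ⊗ₜ[A] v i
      set SN := ∑ i, wedge (nab (u i)) ⊗ₜ[A] v i
      set SW := ∑ i, wedgeMid A Ω Ω2 wedge (u i) (nab (v i))
      have hx : SN - SS = (SN + SW) - (SS + SW) := by abel
      rw [hx, hk, hh]; abel
    obtain ⟨ψ, hψ⟩ := hg.2.2 τ
    have hτ : τ = ∑ i, ψ (v i) • u i := by
      rw [← hψ]
      simp only []
      rw [hrep, map_sum]
      exact Finset.sum_congr rfl fun i _ => by simp [contractR]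
    set E : Ω2 ⊗[A] Ω →ₗ[A] Ω2 :=
      TensorProduct.lift (((LinearMap.lsmul A Ω2).comp ψ).flip) with hEdef
    have hE := congrArg E hdiff
    simp only [map_sum, map_zero] at hE
    have hE' : ∑ i, ψ (v i) • (d1 (u i) - wedge (nabS (u i))) = 0 := by
      rw [← hE]
      exact Finset.sum_congr rfl fun i _ => by
        simp [hEdef, TensorProduct.lift.tmul, smul_sub]
    have hterm : ∀ (f : A) (ω : Ω),
        d1 (f • ω) - wedge (nabS (f • ω)) = f • (d1 ω - wedge (nabS ω)) := by
      intro f ω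
      rw [hd1 f ω, hnabS f ω, map_add, map_smul, smul_sub]
      abel
    have hzero : d1 τ - wedge (nabS τ) = 0 := by
      rw [hτ]
      calc d1 (∑ i, ψ (v i) • u i) - wedge (nabS (∑ i, ψ (v i) • u i))
          = ∑ i, (d1 (ψ (v i) • u i) - wedge (nabS (ψ (v i) • u i))) := by
            simp only [map_sum, Finset.sum_sub_distrib]
        _ = ∑ i, ψ (v i) • (d1 (u i) - wedge (nabS (u i))) :=
            Finset.sum_congr rfl fun i _ => hterm _ _
        _ = 0 := hE'
    exact (sub_eq_zero.mp hzero).symm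

end WeakRiemannian
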